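/- Modal Kochen–Specker theorem: Let L be an orthomodular lattice and L^◇ a Boolean saturated modal extension of L with possibility space ◇L (the Boolean subalgebra of L^◇ generated by {◇P : P ∈ L}). Then L admits a global valuation if and only if for each possibility space there exists a Boolean homomorphism f : ◇L → 2 admitting a compatible actualization, i.e. a global valuation (v_i : W_i → 2) over the Boolean sublattices W_i of L with v_i agreeing with f on W_i ∩ ◇L for all i. -/
import Mathlib


/-- An orthomodular lattice: a bounded lattice with an involution `compl`
satisfying De Morgan, `x ⊓ compl x = ⊥`, and the orthomodular law. -/
class OML (α : Type*) extends Lattice α, BoundedOrder α where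
  compl : α → α
  compl_compl : ∀ x : α, compl (compl x) = x
  compl_sup : ∀ x y : α, compl (x ⊔ y) = compl x ⊓ compl y
  inf_compl : ∀ x : α, x ⊓ compl x = ⊥
  orthomodular : ∀ x y : α, x ⊔ (compl x ⊓ (x ⊔ y)) = x ⊔ y

/-- A Boolean saturated orthomodular lattice: an orthomodular lattice with a
possibility operator `dia` satisfying S1–S7. -/
class BSOML (α : Type*) extends OML α where
  dia : α → α
  S1 : ∀ x : α, x ≤ dia x
  S2 : dia ⊥ = ⊥
  S3 : ∀ x : α, dia (dia x) = dia x
  S4 : ∀ x y : α, dia (x ⊔ y) = dia x ⊔ dia y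
  S5 : ∀ x y : α, y = (y ⊓ dia x) ⊔ (y ⊓ compl (dia x))
  S6 : ∀ x y : α, dia (x ⊓ dia y) = dia x ⊓ dia y
  S7 : ∀ x y : α, compl (dia x) ⊓ dia y ≤ dia (compl x ⊓ (y ⊔ x))

/-- An element `z` is central iff `a = (a ⊓ z) ⊔ (a ⊓ compl z)` for all `a`. -/
def central {α : Type*} [OML α] (z : α) : Prop :=
  ∀ a : α, a = (a ⊓ z) ⊔ (a ⊓ OML.compl z)

/-- A Boolean subalgebra of `α`: a subset containing ⊥ and ⊤, closed under
orthocomplement, meet and join, on which the distributive law holds. -/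
def IsBoolSub {α : Type*} [OML α] (W : Set α) : Prop :=
  (⊥ : α) ∈ W ∧ (⊤ : α) ∈ W ∧ (∀ a ∈ W, OML.compl a ∈ W) ∧
  (∀ a ∈ W, ∀ b ∈ W, a ⊓ b ∈ W) ∧ (∀ a ∈ W, ∀ b ∈ W, a ⊔ b ∈ W) ∧
  (∀ a ∈ W, ∀ b ∈ W, ∀ c ∈ W, a ⊓ (b ⊔ c) = (a ⊓ b) ⊔ (a ⊓ c))

/-- `v` is a Boolean homomorphism from `W` to the two-element Boolean algebra. -/
def IsHomOn {α : Type*} [OML α] (W : Set α) (v : α → Bool) : Prop :=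
  v ⊥ = false ∧ v ⊤ = true ∧ (∀ a ∈ W, v (OML.compl a) = !(v a)) ∧
  (∀ a ∈ W, ∀ b ∈ W, v (a ⊓ b) = (v a && v b)) ∧
  (∀ a ∈ W, ∀ b ∈ W, v (a ⊔ b) = (v a || v b))

/-- A subset closed under the orthomodular lattice operations. -/
def ClosedUnderOps {α : Type*} [OML α] (S : Set α) : Prop :=
  (⊥ : α) ∈ S ∧ (⊤ : α) ∈ S ∧ (∀ a ∈ S, OML.compl a ∈ S) ∧
  (∀ a ∈ S, ∀ b ∈ S, a ⊓ b ∈ S) ∧ (∀ a ∈ S, ∀ b ∈ S, a ⊔ b ∈ S)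

/-- A global valuation: a family of Boolean homomorphisms, one for each Boolean
subalgebra, agreeing on overlaps. -/
def HasGlobalValuation (α : Type*) [OML α] : Prop :=
  ∃ v : ∀ W : Set α, IsBoolSub W → α → Bool,
    (∀ (W : Set α) (hW : IsBoolSub W), IsHomOn W (v W hW)) ∧
    (∀ (W₁ W₂ : Set α) (h₁ : IsBoolSub W₁) (h₂ : IsBoolSub W₂) (x : α),
      x ∈ W₁ → x ∈ W₂ → v W₁ h₁ x = v W₂ h₂ x)

section helpers
variable {γ : Type*} [OML γ]

lemma oml_compl_top : (OML.compl ⊤ : γ) = ⊥ := by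
  have h := OML.inf_compl (⊤ : γ); rwa [top_inf_eq] at h

lemma oml_compl_bot : (OML.compl ⊥ : γ) = ⊤ := by
  have h := OML.compl_compl (⊤ : γ); rw [oml_compl_top] at h; exact h

lemma oml_compl_inf (a b : γ) :
    OML.compl (a ⊓ b) = OML.compl a ⊔ OML.compl b := by
  have h := OML.compl_sup (OML.compl a) (OML.compl b)
  rw [OML.compl_compl, OML.compl_compl] at h
  rw [← h, OML.compl_compl]

lemma oml_dual_om {z d : γ} (h : d ≤ z) : z ⊓ (OML.compl z ⊔ d) = d := by
  set t := z ⊓ (OML.compl z ⊔ d) with ht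
  have hdt : d ≤ t := le_inf h le_sup_right
  have hom := OML.orthomodular d t
  rw [sup_eq_right.mpr hdt] at hom
  have hc : OML.compl (OML.compl z ⊔ d) = z ⊓ OML.compl d := by
    rw [OML.compl_sup, OML.compl_compl]
  have hzero : OML.compl d ⊓ t = ⊥ := by
    have h1 : OML.compl d ⊓ t = (OML.compl z ⊔ d) ⊓ OML.compl (OML.compl z ⊔ d) := by
      rw [hc, ht]
      simp [inf_comm, inf_assoc, inf_left_comm]
    rw [h1, OML.inf_compl]
  rw [hzero, sup_bot_eq] at hom
  exact hom.symm

lemma central_distrib {z : γ} (hz : central z) (b c : γ) :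
    z ⊓ (b ⊔ c) = (z ⊓ b) ⊔ (z ⊓ c) := by
  set d := (z ⊓ b) ⊔ (z ⊓ c) with hd
  have hdz : d ≤ z := sup_le inf_le_left inf_le_left
  have hb : b ≤ OML.compl z ⊔ d := by
    conv_lhs => rw [hz b]
    refine sup_le ?_ (le_trans inf_le_right le_sup_left)
    calc b ⊓ z = z ⊓ b := inf_comm b z
    _ ≤ d := le_sup_left
    _ ≤ OML.compl z ⊔ d := le_sup_right
  have hcc : c ≤ OML.compl z ⊔ d := by
    conv_lhs => rw [hz c]
    refine sup_le ?_ (le_trans inf_le_right le_sup_left)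
    calc c ⊓ z = z ⊓ c := inf_comm c z
    _ ≤ d := le_sup_right
    _ ≤ OML.compl z ⊔ d := le_sup_right
  refine le_antisymm ?_ (sup_le (inf_le_inf_left z le_sup_left) (inf_le_inf_left z le_sup_right))
  calc z ⊓ (b ⊔ c) ≤ z ⊓ (OML.compl z ⊔ d) := inf_le_inf_left z (sup_le hb hcc)
  _ = d := oml_dual_om hdz

lemma central_bot : central (⊥ : γ) := by
  intro a; rw [oml_compl_bot]; simp

lemma central_top : central (⊤ : γ) := by
  intro a; rw [oml_compl_top]; simp

lemma central_compl {z : γ} (hz : central z) : central (OML.compl z) := by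
  intro a; rw [OML.compl_compl, sup_comm]; exact hz a

lemma central_inf {z w : γ} (hz : central z) (hw : central w) : central (z ⊓ w) := by
  intro a
  have h4 : a = ((a ⊓ z) ⊓ w ⊔ (a ⊓ z) ⊓ OML.compl w) ⊔
      ((a ⊓ OML.compl z) ⊓ w ⊔ (a ⊓ OML.compl z) ⊓ OML.compl w) := by
    rw [← hw (a ⊓ z), ← hw (a ⊓ OML.compl z)]; exact hz a
  rw [oml_compl_inf]
  refine le_antisymm ?_ (sup_le inf_le_left inf_le_left)
  calc a = _ := h4
  _ ≤ (a ⊓ (z ⊓ w)) ⊔ (a ⊓ (OML.compl z ⊔ OML.compl w)) := by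
      refine sup_le (sup_le ?_ ?_) (sup_le ?_ ?_)
      · exact le_trans (le_of_eq (inf_assoc a z w)) le_sup_left
      · exact le_trans (le_inf (le_trans inf_le_left inf_le_left)
          (le_trans inf_le_right le_sup_right)) le_sup_right
      · exact le_trans (le_inf (le_trans inf_le_left inf_le_left)
          (le_trans (inf_le_left.trans inf_le_right) le_sup_left)) le_sup_right
      · exact le_trans (le_inf (le_trans inf_le_left inf_le_left)
          (le_trans inf_le_right le_sup_right)) le_sup_right

lemma central_sup {z w : γ} (hz : central z) (hw : central w) : central (z ⊔ w) := by
  have h : z ⊔ w = OML.compl (OML.compl z ⊓ OML.compl w) := by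
    rw [oml_compl_inf, OML.compl_compl, OML.compl_compl]
  rw [h]
  exact central_compl (central_inf (central_compl hz) (central_compl hw))

end helpers

open Classical in
noncomputable def trivBSOML (α : Type*) [OML α] : BSOML α where
  dia x := if x = ⊥ then ⊥ else ⊤
  S1 x := by by_cases h : x = ⊥ <;> simp [h]
  S2 := by simp
  S3 x := by
    by_cases h : x = ⊥
    · simp [h]
    · simp only [if_neg h]
      by_cases ht : (⊤ : α) = ⊥ <;> simp [ht]
  S4 x y := by
    by_cases hx : x = ⊥ <;> by_cases hy : y = ⊥ <;>
      simp [hx, hy, sup_eq_bot_iff]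
  S5 x y := by
    by_cases h : x = ⊥ <;> simp [h, oml_compl_bot, oml_compl_top]
  S6 x y := by
    by_cases hy : y = ⊥ <;> by_cases hx : x = ⊥ <;> simp [hx, hy]
  S7 x y := by
    by_cases hx : x = ⊥
    · simp [hx, oml_compl_bot]
    · simp [hx, oml_compl_top]

open Classical in
lemma trivBSOML_dia {α : Type*} [OML α] (x : α) :
    BSOML.dia (self := trivBSOML α) x =
      (if x = ⊥ then (⊥ : α) else (⊤ : α)) := rfl

/-- Modal Kochen–Specker theorem: an orthomodular lattice `α` admits a global
valuation iff for every Boolean saturated modal extension (an embedding `e` of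
`α` into a Boolean saturated orthomodular lattice `β`) and its possibility
space `PS` (the subalgebra of `β` generated by the `◇(e P)`), there is a
Boolean homomorphism `f` on `PS` admitting a compatible actualization, i.e. a
global valuation on `α` agreeing with `f` on each `Wᵢ ∩ ◇L`. -/
theorem stmt_14 {α : Type u} [OML α] :
    HasGlobalValuation α ↔
      ∀ (β : Type u) [BSOML β] (e : α → β),
        Function.Injective e →
        (∀ x y : α, e (x ⊓ y) = e x ⊓ e y) →
        (∀ x y : α, e (x ⊔ y) = e x ⊔ e y) →
        (∀ x : α, e (OML.compl x) = OML.compl (e x)) →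
        e ⊥ = ⊥ → e ⊤ = ⊤ →
        ∀ PS : Set β, ClosedUnderOps PS →
          {q : β | ∃ Q : α, q = BSOML.dia (e Q)} ⊆ PS →
          (∀ T : Set β, ClosedUnderOps T →
            {q : β | ∃ Q : α, q = BSOML.dia (e Q)} ⊆ T → PS ⊆ T) →
          ∃ f : β → Bool, IsHomOn PS f ∧
            ∃ v : ∀ W : Set α, IsBoolSub W → α → Bool,
              (∀ (W : Set α) (hW : IsBoolSub W), IsHomOn W (v W hW)) ∧
              (∀ (W₁ W₂ : Set α) (h₁ : IsBoolSub W₁) (h₂ : IsBoolSub W₂)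
                (x : α), x ∈ W₁ → x ∈ W₂ → v W₁ h₁ x = v W₂ h₂ x) ∧
              (∀ (W : Set α) (hW : IsBoolSub W) (x : α),
                x ∈ W → e x ∈ PS → v W hW x = f (e x)) := by
  constructor
  · rintro ⟨v, hv, hagree⟩
    intro β _ e einj einf esup ecompl ebot etop PS hPS hdia hmin
    classical
    -- every element of PS is central
    have hZclosed : ClosedUnderOps {z : β | central z} :=
      ⟨central_bot, central_top, fun a ha => central_compl ha,
       fun a ha b hb => central_inf ha hb, fun a ha b hb => central_sup ha hb⟩
    have hdiaZ : {q : β | ∃ Q : α, q = BSOML.dia (e Q)} ⊆ {z : β | central z} := by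
      rintro q ⟨Q, rfl⟩ a
      exact BSOML.S5 (e Q) a
    have hPScent : ∀ p ∈ PS, central p := fun p hp => hmin _ hZclosed hdiaZ hp
    -- the preimage of PS is a Boolean subalgebra of α
    set C : Set α := {x | e x ∈ PS} with hCdef
    have hbotC : (⊥ : α) ∈ C := by show e ⊥ ∈ PS; rw [ebot]; exact hPS.1
    have htopC : (⊤ : α) ∈ C := by show e ⊤ ∈ PS; rw [etop]; exact hPS.2.1
    have hcomplC : ∀ a ∈ C, OML.compl a ∈ C := fun a ha => by
      show e _ ∈ PS; rw [ecompl]; exact hPS.2.2.1 _ ha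
    have hinfC : ∀ a ∈ C, ∀ b ∈ C, a ⊓ b ∈ C := fun a ha b hb => by
      show e _ ∈ PS; rw [einf]; exact hPS.2.2.2.1 _ ha _ hb
    have hsupC : ∀ a ∈ C, ∀ b ∈ C, a ⊔ b ∈ C := fun a ha b hb => by
      show e _ ∈ PS; rw [esup]; exact hPS.2.2.2.2 _ ha _ hb
    have hC : IsBoolSub C := by
      refine ⟨hbotC, htopC, hcomplC, hinfC, hsupC, ?_⟩
      intro a ha b hb c hc
      apply einj
      rw [einf, esup, esup, einf, einf]
      exact central_distrib (hPScent _ ha) _ _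
    set g : α → Bool := v C hC with hgdef
    have hg : IsHomOn C g := hv C hC
    -- the filter generated by the image of the true elements of g
    set F0 : Set β := {p | p ∈ PS ∧ ∃ x, x ∈ C ∧ g x = true ∧ e x ≤ p} with hF0def
    set Fil : Set β → Prop := fun F => F ⊆ PS ∧ (⊤ : β) ∈ F ∧ (⊥ : β) ∉ F ∧
      (∀ a ∈ F, ∀ b ∈ F, a ⊓ b ∈ F) ∧ (∀ a ∈ F, ∀ b ∈ PS, a ≤ b → b ∈ F) with hFilDef
    have hF0 : Fil F0 := by
      refine ⟨fun p hp => hp.1, ⟨hPS.2.1, ⊤, htopC, hg.2.1, le_top⟩, ?_, ?_, ?_⟩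
      · rintro ⟨-, x, hxC, hgx, hxle⟩
        have hx : x = ⊥ := einj (by rw [ebot]; exact le_bot_iff.mp hxle)
        rw [hx, hg.1] at hgx
        exact Bool.false_ne_true hgx
      · rintro a ⟨haPS, x, hxC, hgx, hxle⟩ b ⟨hbPS, y, hyC, hgy, hyle⟩
        refine ⟨hPS.2.2.2.1 _ haPS _ hbPS, x ⊓ y, hC.2.2.2.1 _ hxC _ hyC, ?_, ?_⟩
        · rw [hg.2.2.2.1 x hxC y hyC, hgx, hgy]; rfl
        · rw [einf]; exact inf_le_inf hxle hyle
      · rintro a ⟨haPS, x, hxC, hgx, hxle⟩ b hbPS hab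
        exact ⟨hbPS, x, hxC, hgx, hxle.trans hab⟩
    set S : Set (Set β) := {F | F0 ⊆ F ∧ Fil F} with hSdef
    have hchain : ∀ c ⊆ S, IsChain (· ⊆ ·) c → c.Nonempty →
        ∃ ub ∈ S, ∀ s ∈ c, s ⊆ ub := by
      intro c hcS hcchain hcne
      obtain ⟨F1, hF1⟩ := hcne
      refine ⟨⋃₀ c, ⟨fun p hp => ⟨F1, hF1, (hcS hF1).1 hp⟩,
        fun p hp => ?_, ⟨F1, hF1, (hcS hF1).2.2.1⟩, ?_, ?_, ?_⟩,
        fun s hs => Set.subset_sUnion_of_mem hs⟩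
      · obtain ⟨F, hFc, hpF⟩ := hp
        exact (hcS hFc).2.1 hpF
      · rintro ⟨F, hFc, hbF⟩
        exact (hcS hFc).2.2.2.1 hbF
      · rintro a ⟨Fa, hFa, haF⟩ b ⟨Fb, hFb, hbF⟩
        rcases hcchain.total hFa hFb with hle | hle
        · exact ⟨Fb, hFb, (hcS hFb).2.2.2.2.1 _ (hle haF) _ hbF⟩
        · exact ⟨Fa, hFa, (hcS hFa).2.2.2.2.1 _ haF _ (hle hbF)⟩
      · rintro a ⟨Fa, hFa, haF⟩ b hbPS hab
        exact ⟨Fa, hFa, (hcS hFa).2.2.2.2.2 _ haF _ hbPS hab⟩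
    obtain ⟨U, hF0Usub, hUmax⟩ :=
      zorn_subset_nonempty S hchain F0 ⟨subset_rfl, hF0⟩
    have hF0U : F0 ⊆ U := hUmax.1.1
    have hUfil : Fil U := hUmax.1.2
    -- maximality: ultrafilter property
    have hcomplU : ∀ a ∈ PS, a ∉ U → OML.compl a ∈ U := by
      intro a haPS haU
      set F' : Set β := {p | p ∈ PS ∧ ∃ u ∈ U, u ⊓ a ≤ p} with hF'def
      have hUF' : U ⊆ F' := fun u hu => ⟨hUfil.1 hu, u, hu, inf_le_left⟩
      have haF' : a ∈ F' := ⟨haPS, ⊤, hUfil.2.1, le_of_eq (top_inf_eq a)⟩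
      by_cases hbot : (⊥ : β) ∈ F'
      · obtain ⟨-, u, huU, hle⟩ := hbot
        have hua : u ⊓ a = ⊥ := le_bot_iff.mp hle
        have hule : u ≤ OML.compl a := by
          calc u = (u ⊓ a) ⊔ (u ⊓ OML.compl a) := hPScent a haPS u
          _ = u ⊓ OML.compl a := by rw [hua, bot_sup_eq]
          _ ≤ OML.compl a := inf_le_right
        exact hUfil.2.2.2.2 u huU _ (hPS.2.2.1 a haPS) hule
      · have hF'S : F' ∈ S := by
          refine ⟨hF0U.trans hUF', fun p hp => hp.1, hUF' hUfil.2.1, hbot, ?_, ?_⟩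
          · rintro p ⟨hpPS, u1, hu1, h1⟩ q ⟨hqPS, u2, hu2, h2⟩
            refine ⟨hPS.2.2.2.1 _ hpPS _ hqPS, u1 ⊓ u2, hUfil.2.2.2.1 _ hu1 _ hu2, ?_⟩
            exact le_inf (le_trans (inf_le_inf_right a inf_le_left) h1)
              (le_trans (inf_le_inf_right a inf_le_right) h2)
          · rintro p ⟨hpPS, u1, hu1, h1⟩ q hqPS hpq
            exact ⟨hqPS, u1, hu1, h1.trans hpq⟩
        exact absurd ((hUmax.2 hF'S hUF') haF') haU
    have hnotboth : ∀ a ∈ PS, a ∈ U → OML.compl a ∉ U := by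
      intro a haPS haU hcaU
      have h2 := hUfil.2.2.2.1 _ haU _ hcaU
      rw [OML.inf_compl] at h2
      exact hUfil.2.2.1 h2
    set f : β → Bool := fun q => decide (q ∈ U) with hfdef
    have hfhom : IsHomOn PS f := by
      refine ⟨by simp [hfdef, hUfil.2.2.1], by simp [hfdef, hUfil.2.1], ?_, ?_, ?_⟩
      · intro a haPS
        by_cases haU : a ∈ U
        · simp [hfdef, haU, hnotboth a haPS haU]
        · simp [hfdef, haU, hcomplU a haPS haU]
      · intro a haPS b hbPS
        by_cases haU : a ∈ U <;> by_cases hbU : b ∈ U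
        · simp [hfdef, haU, hbU, hUfil.2.2.2.1 _ haU _ hbU]
        · have hnm : a ⊓ b ∉ U := fun hm => hbU (hUfil.2.2.2.2 _ hm _ hbPS inf_le_right)
          simp [hfdef, haU, hbU, hnm]
        · have hnm : a ⊓ b ∉ U := fun hm => haU (hUfil.2.2.2.2 _ hm _ haPS inf_le_left)
          simp [hfdef, haU, hbU, hnm]
        · have hnm : a ⊓ b ∉ U := fun hm => haU (hUfil.2.2.2.2 _ hm _ haPS inf_le_left)
          simp [hfdef, haU, hbU, hnm]
      · intro a haPS b hbPS
        have habPS : a ⊔ b ∈ PS := hPS.2.2.2.2 _ haPS _ hbPS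
        by_cases haU : a ∈ U
        · have hj : a ⊔ b ∈ U := hUfil.2.2.2.2 _ haU _ habPS le_sup_left
          simp [hfdef, haU, hj]
        · by_cases hbU : b ∈ U
          · have hj : a ⊔ b ∈ U := hUfil.2.2.2.2 _ hbU _ habPS le_sup_right
            simp [hfdef, haU, hbU, hj]
          · have hca := hcomplU a haPS haU
            have hcb := hcomplU b hbPS hbU
            have hmeet := hUfil.2.2.2.1 _ hca _ hcb
            have hj : a ⊔ b ∉ U := by
              intro habU
              have h2 := hUfil.2.2.2.1 _ habU _ hmeet
              rw [← OML.compl_sup, OML.inf_compl] at h2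
              exact hUfil.2.2.1 h2
            simp [hfdef, haU, hbU, hj]
    refine ⟨f, hfhom, v, hv, hagree, ?_⟩
    intro W hW x hxW hexPS
    have hxC : x ∈ C := hexPS
    rw [hagree W C hW hC x hxW hxC]
    show g x = f (e x)
    by_cases hgx : g x = true
    · have hxU : e x ∈ U := hF0U ⟨hexPS, x, hxC, hgx, le_rfl⟩
      simp [hfdef, hxU, hgx]
    · have hgx' : g x = false := Bool.eq_false_iff.mpr hgx
      have hgcx : g (OML.compl x) = true := by
        rw [hg.2.2.1 x hxC, hgx']; rfl
      have hcU : OML.compl (e x) ∈ U := by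
        have hmem : e (OML.compl x) ∈ U := hF0U
          ⟨by rw [ecompl]; exact hPS.2.2.1 _ hexPS,
           OML.compl x, hcomplC x hxC, hgcx, le_rfl⟩
        rwa [ecompl] at hmem
      have hxU : e x ∉ U := fun hm => hnotboth (e x) hexPS hm hcU
      simp [hfdef, hxU, hgx']
  · intro h
    letI : BSOML α := trivBSOML α
    have hclosed : ClosedUnderOps ({⊥, ⊤} : Set α) := by
      refine ⟨by simp, by simp, ?_, ?_, ?_⟩
      · rintro a (rfl | rfl)
        · simp [oml_compl_bot]
        · simp [oml_compl_top]
      · rintro a (rfl | rfl) b (rfl | rfl) <;> simp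
      · rintro a (rfl | rfl) b (rfl | rfl) <;> simp
    have hsub : {q : α | ∃ Q : α, q = BSOML.dia (id Q)} ⊆ ({⊥, ⊤} : Set α) := by
      rintro q ⟨Q, rfl⟩
      rw [trivBSOML_dia]
      split <;> simp
    have hmin : ∀ T : Set α, ClosedUnderOps T →
        {q : α | ∃ Q : α, q = BSOML.dia (id Q)} ⊆ T → ({⊥, ⊤} : Set α) ⊆ T := by
      rintro T hT - x (rfl | rfl)
      · exact hT.1
      · exact hT.2.1
    obtain ⟨f, hf, v, hv1, hv2, -⟩ :=
      h α id (fun _ _ hxy => hxy) (fun _ _ => rfl) (fun _ _ => rfl) (fun _ => rfl)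
        rfl rfl ({⊥, ⊤} : Set α) hclosed hsub hmin
    exact ⟨v, hv1, hv2⟩
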